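/- Let m ∈ ℕ and let p be a prime, with A = {1,…,p−1}. Then there exists R ∈ ℕ such that for every integer r ≥ R, D_{A,m}(C_p^r) ≥ (log p) · m / log(1 + m(p−1)) · r, where log denotes the natural logarithm. -/

import Mathlib

open scoped BigOperators

/-- `l` encodes a `W`-weighted zero-subsum of the sequence (multiset) `S`:
a nonempty list of (weight, group element) pairs with weights in `W`, whose
group elements form a sub-multiset of `S` and whose weighted sum is zero. -/
def IsWZeroSubsum {G : Type*} [AddCommGroup G] (W : Set ℤ) (S : Multiset G)
    (l : List (ℤ × G)) : Prop :=
  l ≠ [] ∧ (∀ p ∈ l, p.1 ∈ W) ∧ (↑(l.map Prod.snd) : Multiset G) ≤ S ∧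
    (l.map fun p => p.1 • p.2).sum = 0

/-- `S` has a `W`-weighted zero-subsum whose length lies in `L`. -/
def HasWZeroSubsumLen {G : Type*} [AddCommGroup G] (W : Set ℤ) (S : Multiset G)
    (L : Set ℕ) : Prop :=
  ∃ l : List (ℤ × G), IsWZeroSubsum W S l ∧ l.length ∈ L

/-- `S` has `m` pairwise disjoint `W`-weighted zero-subsums. -/
def HasDisjointWZeroSubsums {G : Type*} [AddCommGroup G] (W : Set ℤ) (S : Multiset G)
    (m : ℕ) : Prop :=
  ∃ ls : List (List (ℤ × G)), ls.length = m ∧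
    (∀ l ∈ ls, l ≠ [] ∧ (∀ p ∈ l, p.1 ∈ W) ∧ (l.map fun p => p.1 • p.2).sum = 0) ∧
    (↑(ls.flatten.map Prod.snd) : Multiset G) ≤ S

/-- The `m`-wise `W`-weighted Davenport constant `D_{W,m}(G)`. -/
noncomputable def DW (W : Set ℤ) (G : Type*) [AddCommGroup G] (m : ℕ) : ℕ :=
  sInf {n : ℕ | ∀ S : Multiset G, n ≤ Multiset.card S → HasDisjointWZeroSubsums W S m}

/-- The `L`-constrained `W`-weighted Davenport constant `s_{W,L}(G)`, valued in `ℕ∞`. -/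
noncomputable def sWL (W : Set ℤ) (G : Type*) [AddCommGroup G] (L : Set ℕ) : ℕ∞ :=
  sInf {N : ℕ∞ | ∃ n : ℕ, N = (n : ℕ∞) ∧
    ∀ S : Multiset G, n ≤ Multiset.card S → HasWZeroSubsumLen W S L}

/-- The `d`-constrained `W`-weighted Davenport constant `s_{W,≤d}(G)`. -/
noncomputable def sWle (W : Set ℤ) (G : Type*) [AddCommGroup G] (d : ℕ) : ℕ∞ :=
  sWL W G {t | 1 ≤ t ∧ t ≤ d}

/-- `e_W(G)`: the smallest `t ≥ 1` such that some `t` weights from `W` sum to a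
multiple of `exp(G)`. -/
noncomputable def eW (W : Set ℤ) (G : Type*) [AddCommGroup G] : ℕ :=
  sInf {t : ℕ | 1 ≤ t ∧ ∃ w : Fin t → ℤ, (∀ i, w i ∈ W) ∧
    ((AddMonoid.exponent G : ℤ) ∣ ∑ i, w i)}

/-- `W` is multiplicatively closed modulo `n`. -/
def MulClosedMod (W : Set ℤ) (n : ℕ) : Prop :=
  ∀ w ∈ W, ∀ w' ∈ W, ∃ u ∈ W, (n : ℤ) ∣ w * w' - u



section Aux

/-- From a sub-multiset of an indexed family, extract an injective index map. -/
lemma subInj {ι α β : Type*} [DecidableEq ι] (g : ι → α) :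
    ∀ (l : List (β × α)) (s : Finset ι), (↑(l.map Prod.snd) : Multiset α) ≤ s.val.map g →
    ∃ h : Fin l.length → ι, Function.Injective h ∧ (∀ k, h k ∈ s) ∧
      (∀ k, g (h k) = (l.get k).2) := by
  intro l
  induction l with
  | nil =>
    intro s _
    exact ⟨Fin.elim0, fun k => k.elim0, fun k => k.elim0, fun k => k.elim0⟩
  | cons a l ih =>
    intro s hle
    have hmem : a.2 ∈ Multiset.map g s.val := by
      have : a.2 ∈ (↑((a :: l).map Prod.snd) : Multiset α) := by simp
      exact Multiset.mem_of_le hle this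
    obtain ⟨i, hi, hgi⟩ := Multiset.mem_map.mp hmem
    have hsval : s.val = i ::ₘ (s.erase i).val := by
      rw [Finset.erase_val]
      exact (Multiset.cons_erase hi).symm
    have hle' : (↑(l.map Prod.snd) : Multiset α) ≤ (s.erase i).val.map g := by
      have : (↑((a :: l).map Prod.snd) : Multiset α)
          = a.2 ::ₘ ↑(l.map Prod.snd) := by simp
      rw [this, hsval] at hle
      rw [Multiset.map_cons, hgi] at hle
      exact (Multiset.cons_le_cons_iff a.2).mp hle
    obtain ⟨h, hinj, hmem', hval⟩ := ih (s.erase i) hle'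
    refine ⟨Fin.cases i (fun k => h k), ?_, ?_, ?_⟩
    · intro x y hxy
      induction x using Fin.cases with
      | zero =>
        induction y using Fin.cases with
        | zero => rfl
        | succ y =>
          exfalso
          simp only [Fin.cases_zero, Fin.cases_succ] at hxy
          exact (Finset.ne_of_mem_erase (hmem' y)) hxy.symm
      | succ x =>
        induction y using Fin.cases with
        | zero =>
          exfalso
          simp only [Fin.cases_zero, Fin.cases_succ] at hxy
          exact (Finset.ne_of_mem_erase (hmem' x)) hxy
        | succ y =>
          simp only [Fin.cases_succ] at hxy
          exact congrArg Fin.succ (hinj hxy)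
    · intro k
      induction k using Fin.cases with
      | zero => simpa using hi
      | succ k => simpa using Finset.mem_of_mem_erase (hmem' k)
    · intro k
      induction k using Fin.cases with
      | zero => simpa using hgi
      | succ k => simpa using hval k

-- combine: a ≤ S - b, b ≤ S → a + b ≤ S
lemma add_le_of_le_sub {α : Type*} [DecidableEq α] {a b S : Multiset α}
    (hb : b ≤ S) (ha : a ≤ S - b) : a + b ≤ S := by
  rw [Multiset.le_iff_count]
  intro x
  have h1 := Multiset.le_iff_count.mp ha x
  have h2 := Multiset.le_iff_count.mp hb x
  rw [Multiset.count_sub] at h1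
  rw [Multiset.count_add]
  omega

/-- coefficient of index `i` in group `j` -/
def delta {n M : ℕ} (φ : Fin n → Option (Fin M × ℤ)) (j : Fin M) (i : Fin n) : ℤ :=
  match φ i with
  | some q => if q.1 = j then q.2 else 0
  | none => 0

lemma listSum {G : Type*} [AddCommGroup G] (l : List (ℤ × G)) :
    (l.map fun q => q.1 • q.2).sum = ∑ k : Fin l.length, (l.get k).1 • (l.get k).2 := by
  induction l with
  | nil => simp
  | cons a l ih => simp [Fin.sum_univ_succ, ih]

lemma buildPhi {n : ℕ} {G : Type*} [AddCommGroup G] (g : Fin n → G) :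
    ∀ (ls : List (List (ℤ × G))) (s : Finset (Fin n)),
    (↑(ls.flatten.map Prod.snd) : Multiset G) ≤ s.val.map g →
    ∃ φ : Fin n → Option (Fin ls.length × ℤ),
      (∀ i, φ i ≠ none → i ∈ s) ∧
      (∀ i q, φ i = some q → (q.2, g i) ∈ ls.get q.1) ∧
      (∀ j : Fin ls.length, ls.get j ≠ [] → ∃ i w, φ i = some (j, w)) ∧
      (∀ j : Fin ls.length, (∑ i, delta φ j i • g i) = ((ls.get j).map fun q => q.1 • q.2).sum) := by
  classical
  intro ls
  induction ls with
  | nil =>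
    intro s _
    exact ⟨fun _ => none, by simp, by simp, fun j => j.elim0, fun j => j.elim0⟩
  | cons l ls ih =>
    intro s hle
    have hsplit : (↑((l :: ls).flatten.map Prod.snd) : Multiset G)
        = ↑(l.map Prod.snd) + ↑(ls.flatten.map Prod.snd) := by
      have hx : (l :: ls).flatten.map Prod.snd
          = (l.map Prod.snd ++ ls.flatten.map Prod.snd : List G) := by simp
      rw [hx, ← Multiset.coe_add]
    rw [hsplit] at hle
    have hle1 : (↑(l.map Prod.snd) : Multiset G) ≤ s.val.map g :=
      le_trans (Multiset.le_add_right _ _) hle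
    obtain ⟨h, hinj, hhs, hgv⟩ := subInj g l s hle1
    set timg : Finset (Fin n) := Finset.image h Finset.univ with htimg
    have htsub : timg ⊆ s := by
      intro i hi
      obtain ⟨k, _, rfl⟩ := Finset.mem_image.mp hi
      exact hhs k
    have hmemt : ∀ i, i ∈ timg ↔ ∃ k, h k = i := by
      intro i; simp [htimg]
    set s' := s \ timg with hs'
    have hsval : Multiset.map g s.val = Multiset.map g timg.val + Multiset.map g s'.val := by
      rw [← Multiset.map_add]
      congr 1
      have h1 : timg.val ≤ s.val := Finset.val_le_iff.mpr htsub
      rw [hs', Finset.sdiff_val, add_comm]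
      exact (tsub_add_cancel_of_le h1).symm
    have htval : Multiset.map g timg.val = ↑(l.map Prod.snd) := by
      have hnodup : (Multiset.map h Finset.univ.val).Nodup :=
        Multiset.Nodup.map hinj Finset.univ.nodup
      have himgval : timg.val = Multiset.map h Finset.univ.val := by
        rw [htimg, Finset.image_val, Multiset.dedup_eq_self.mpr hnodup]
      rw [himgval, Multiset.map_map]
      have : Multiset.map (g ∘ h) Finset.univ.val
          = Multiset.map (fun k : Fin l.length => (l.get k).2) Finset.univ.val :=
        Multiset.map_congr rfl (fun k _ => hgv k)
      rw [this]
      have huniv : (Finset.univ.val : Multiset (Fin l.length)) = ↑(List.finRange l.length) := rfl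
      rw [huniv, Multiset.map_coe, Multiset.coe_eq_coe]
      have hy : List.map (fun k : Fin l.length => (l.get k).2) (List.finRange l.length)
          = List.map Prod.snd (List.map l.get (List.finRange l.length)) := by
        rw [List.map_map]; rfl
      rw [hy, List.map_get_finRange]
    have hle2 : (↑(ls.flatten.map Prod.snd) : Multiset G) ≤ s'.val.map g := by
      rw [hsval, htval] at hle
      exact le_of_add_le_add_left hle
    obtain ⟨φ', hD', hC', hA', hB'⟩ := ih s' hle2
    -- define φ
    set φ : Fin n → Option (Fin (ls.length + 1) × ℤ) := fun i =>
      if hk : ∃ k, h k = i then some ((0 : Fin (ls.length + 1)), (l.get hk.choose).1)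
      else (φ' i).map (fun q => (q.1.succ, q.2)) with hφ
    have F1 : ∀ k, φ (h k) = some ((0 : Fin (ls.length + 1)), (l.get k).1) := by
      intro k
      have hk : ∃ k', h k' = h k := ⟨k, rfl⟩
      have : hk.choose = k := hinj hk.choose_spec
      simp only [hφ, dif_pos hk, this]
    have F2 : ∀ i, (¬∃ k, h k = i) → φ i = (φ' i).map (fun q => (q.1.succ, q.2)) := by
      intro i hi
      simp only [hφ, dif_neg hi]
    have hs'none : ∀ i, i ∈ timg → φ' i = none := by
      intro i hi
      by_contra hne
      have := hD' i hne
      rw [hs', Finset.mem_sdiff] at this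
      exact this.2 hi
    refine ⟨φ, ?_, ?_, ?_, ?_⟩
    · -- support
      intro i hne
      by_cases hk : ∃ k, h k = i
      · obtain ⟨k, rfl⟩ := hk
        exact hhs k
      · rw [F2 i hk] at hne
        have : φ' i ≠ none := by
          intro hnone; rw [hnone] at hne; exact hne rfl
        have := hD' i this
        rw [hs', Finset.mem_sdiff] at this
        exact this.1
    · -- membership
      intro i q hq
      by_cases hk : ∃ k, h k = i
      · obtain ⟨k, rfl⟩ := hk
        rw [F1 k] at hq
        obtain rfl := (Option.some_inj.mp hq).symm
        show ((l.get k).1, g (h k)) ∈ (l :: ls).get (0 : Fin (ls.length + 1))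
        rw [hgv k]
        show ((l.get k).1, (l.get k).2) ∈ l
        have hmem2 : l.get ⟨k.1, k.2⟩ ∈ l := List.get_mem l ⟨k.1, k.2⟩
        simpa using hmem2
      · rw [F2 i hk] at hq
        obtain ⟨q', hq', rfl⟩ := Option.map_eq_some_iff.mp hq
        have := hC' i q' hq'
        show (q'.2, g i) ∈ (l :: ls).get q'.1.succ
        simpa using this
    · -- nonemptiness
      intro j hjne
      induction j using Fin.cases with
      | zero =>
        have hlne : l ≠ [] := hjne
        have hpos : 0 < l.length := List.length_pos_iff.mpr hlne
        refine ⟨h ⟨0, hpos⟩, (l.get ⟨0, hpos⟩).1, ?_⟩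
        exact F1 _
      | succ j' =>
        have : ls.get j' ≠ [] := by simpa using hjne
        obtain ⟨i, w, hiw⟩ := hA' j' this
        refine ⟨i, w, ?_⟩
        have hk : ¬∃ k, h k = i := by
          intro ⟨k, hki⟩
          have : i ∈ timg := (hmemt i).mpr ⟨k, hki⟩
          have := hs'none i this
          rw [this] at hiw
          cases hiw
        rw [F2 i hk, hiw]
        rfl
    · -- sums
      intro j
      induction j using Fin.cases with
      | zero =>
        have hzero : ∀ i ∈ Finset.univ \ timg, delta φ (0 : Fin (ls.length + 1)) i • g i = 0 := by
          intro i hi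
          rw [Finset.mem_sdiff] at hi
          have hk : ¬∃ k, h k = i := fun hk => hi.2 ((hmemt i).mpr hk)
          have := F2 i hk
          unfold delta
          rw [this]
          cases hq' : φ' i with
          | none => simp
          | some q' =>
            simp only [Option.map_some]
            have hne0 : (q'.1.succ : Fin (ls.length + 1)) ≠ (0 : Fin (ls.length + 1)) :=
              Fin.succ_ne_zero q'.1
            simp [hne0]
        have hsum1 : ∑ i, delta φ (0 : Fin (ls.length + 1)) i • g i
            = ∑ i ∈ timg, delta φ (0 : Fin (ls.length + 1)) i • g i := by
          rw [← Finset.sum_subset (Finset.subset_univ timg)]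
          intro i _ hi
          exact hzero i (Finset.mem_sdiff.mpr ⟨Finset.mem_univ i, hi⟩)
        rw [hsum1, htimg, Finset.sum_image (fun a _ b _ hab => hinj hab)]
        have : ∀ k : Fin l.length, delta φ (0 : Fin (ls.length + 1)) (h k) • g (h k)
            = (l.get k).1 • (l.get k).2 := by
          intro k
          unfold delta
          rw [F1 k, hgv k]
          simp
        rw [Finset.sum_congr rfl (fun k _ => this k)]
        have hget0 : (l :: ls).get (0 : Fin (ls.length + 1)) = l := rfl
        rw [hget0, listSum]
      | succ j' =>
        have hptw : ∀ i, delta φ j'.succ i = delta φ' j' i := by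
          intro i
          by_cases hk : ∃ k, h k = i
          · obtain ⟨k, rfl⟩ := hk
            unfold delta
            rw [F1 k, hs'none (h k) ((hmemt _).mpr ⟨k, rfl⟩)]
            have hne0 : (0 : Fin (ls.length + 1)) ≠ j'.succ :=
              (Fin.succ_ne_zero j').symm
            simp [hne0]
          · unfold delta
            rw [F2 i hk]
            cases hq' : φ' i with
            | none => simp
            | some q' =>
              simp only [Option.map_some]
              by_cases hj : q'.1 = j'
              · subst hj; simp
              · have : q'.1.succ ≠ j'.succ := fun hc => hj (Fin.succ_inj.mp hc)
                simp [this, hj]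
        rw [Finset.sum_congr rfl (fun i _ => by rw [hptw i])]
        rw [hB' j']
        congr 1

/-- ZMod-coefficient of index `i` in group `j` for an encoded assignment. -/
def cf {p n m : ℕ} (φ : Fin n → Option (Fin m × Fin (p-1))) (j : Fin m) (i : Fin n) : ZMod p :=
  match φ i with
  | some q => if q.1 = j then (((q.2 : ℕ) + 1 : ℕ) : ZMod p) else 0
  | none => 0

def ZeroOn {p n m r : ℕ} (φ : Fin n → Option (Fin m × Fin (p-1)))
    (g : Fin n → (Fin r → ZMod p)) : Prop :=
  ∀ j : Fin m, ∑ i, cf φ j i • g i = 0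

def FullOn {p n m : ℕ} (φ : Fin n → Option (Fin m × Fin (p-1))) : Prop :=
  ∀ j : Fin m, ∃ i w, φ i = some (j, w)

lemma card_zeroOn_le {p : ℕ} [Fact p.Prime] {n m r : ℕ}
    (φ : Fin n → Option (Fin m × Fin (p-1))) (hFull : FullOn φ) :
    Nat.card {g : Fin n → (Fin r → ZMod p) // ZeroOn φ g} ≤ (p^r)^(n - m) := by
  classical
  have hp2 : 2 ≤ p := (Fact.out : p.Prime).two_le
  set reps : Fin m → Fin n := fun j => (hFull j).choose with hreps
  have hrep : ∀ j, ∃ w, φ (reps j) = some (j, w) := fun j => (hFull j).choose_spec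
  have hrinj : Function.Injective reps := by
    intro j j' hjj
    obtain ⟨w, hw⟩ := hrep j
    obtain ⟨w', hw'⟩ := hrep j'
    rw [hjj, hw'] at hw
    exact ((Prod.mk.injEq _ _ _ _).mp (Option.some_inj.mp hw)).1.symm
  set T : Finset (Fin n) := Finset.image reps Finset.univ with hT
  have hcardT : T.card = m := by
    rw [hT, Finset.card_image_of_injective _ hrinj, Finset.card_univ, Fintype.card_fin]
  have hcfne : ∀ j, cf φ j (reps j) ≠ 0 := by
    intro j
    obtain ⟨w, hw⟩ := hrep j
    unfold cf
    rw [hw]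
    simp only [if_pos rfl]
    intro hc
    have hdvd : p ∣ (w : ℕ) + 1 := (ZMod.natCast_eq_zero_iff _ _).mp hc
    have hlt : (w : ℕ) + 1 < p := by
      have := w.2
      omega
    have := Nat.le_of_dvd (by omega) hdvd
    omega
  have hcfzero : ∀ j j', j ≠ j' → cf φ j' (reps j) = 0 := by
    intro j j' hne
    obtain ⟨w, hw⟩ := hrep j
    unfold cf
    rw [hw]
    simp [hne]
  set Φ : {g : Fin n → (Fin r → ZMod p) // ZeroOn φ g} → ((↥(Tᶜ : Finset (Fin n))) → (Fin r → ZMod p)) :=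
    fun g => fun i => g.1 i.1 with hΦ
  have hinjΦ : Function.Injective Φ := by
    intro g g' hgg
    have hext : ∀ i : Fin n, i ∉ T → g.1 i = g'.1 i := by
      intro i hi
      have := congrFun hgg ⟨i, Finset.mem_compl.mpr hi⟩
      exact this
    apply Subtype.ext
    funext i
    by_cases hiT : i ∈ T
    · obtain ⟨j, _, rfl⟩ := Finset.mem_image.mp hiT
      set f : Fin n → (Fin r → ZMod p) := fun i' => cf φ j i' • (g.1 i' - g'.1 i') with hf
      have hsumf : ∑ i', f i' = 0 := by
        have h1 := g.2 j
        have h2 := g'.2 j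
        calc ∑ i', f i' = ∑ i', (cf φ j i' • g.1 i' - cf φ j i' • g'.1 i') := by
              refine Finset.sum_congr rfl (fun i' _ => ?_)
              exact smul_sub _ _ _
          _ = (∑ i', cf φ j i' • g.1 i') - (∑ i', cf φ j i' • g'.1 i') :=
              Finset.sum_sub_distrib _ _
          _ = 0 := by rw [h1, h2, sub_zero]
      have hoth : ∀ i', i' ≠ reps j → f i' = 0 := by
        intro i' hne
        by_cases hi'T : i' ∈ T
        · obtain ⟨j', _, rfl⟩ := Finset.mem_image.mp hi'T
          have hjj : j' ≠ j := fun hc => hne (by rw [hc])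
          show cf φ j (reps j') • (g.1 (reps j') - g'.1 (reps j')) = 0
          rw [hcfzero j' j hjj, zero_smul]
        · show cf φ j i' • (g.1 i' - g'.1 i') = 0
          rw [hext i' hi'T, sub_self, smul_zero]
      have hfr : f (reps j) = 0 := by
        rw [← Fintype.sum_eq_single (reps j) hoth, hsumf]
      have hsubz : g.1 (reps j) - g'.1 (reps j) = 0 := by
        funext u
        have hfr' : cf φ j (reps j) • (g.1 (reps j) - g'.1 (reps j)) = 0 := hfr
        have := congrFun hfr' u
        simp only [Pi.smul_apply, Pi.sub_apply, smul_eq_mul] at this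
        rcases mul_eq_zero.mp this with hc | hd
        · exact absurd hc (hcfne j)
        · simpa using hd
      have := sub_eq_zero.mp hsubz
      exact this
    · exact hext i hiT
  calc Nat.card {g : Fin n → (Fin r → ZMod p) // ZeroOn φ g}
      ≤ Nat.card ((↥(Tᶜ : Finset (Fin n))) → (Fin r → ZMod p)) :=
        Nat.card_le_card_of_injective Φ hinjΦ
    _ = (p^r)^(n - m) := by
        rw [Nat.card_eq_fintype_card, Fintype.card_fun]
        congr 1
        · rw [Fintype.card_fun, ZMod.card, Fintype.card_fin]
        · rw [Fintype.card_coe, Finset.card_compl, hcardT, Fintype.card_fin]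

/-- Encoding: from disjoint zero-subsums get a full assignment with zero sums. -/
lemma encode {p : ℕ} [Fact p.Prime] {n m r : ℕ} (hm : 1 ≤ m)
    (g : Fin n → (Fin r → ZMod p))
    (hdis : HasDisjointWZeroSubsums (Set.Icc 1 ((p:ℤ) - 1)) (Multiset.map g Finset.univ.val) m) :
    ∃ φ : Fin n → Option (Fin m × Fin (p-1)), FullOn φ ∧ ZeroOn φ g := by
  classical
  have hp2 : 2 ≤ p := (Fact.out : p.Prime).two_le
  have hp1 : 0 < p - 1 := by omega
  obtain ⟨ls, hlen, hprop, hsub⟩ := hdis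
  obtain ⟨φ₀, hD, hC, hA, hB⟩ := buildPhi g ls Finset.univ (by
    simpa using hsub)
  have hW : ∀ i q, φ₀ i = some q → q.2 ∈ Set.Icc (1:ℤ) ((p:ℤ) - 1) := by
    intro i q hq
    have hmem := hC i q hq
    have hgm : ls.get q.1 ∈ ls := List.get_mem ls q.1
    exact ((hprop _ hgm).2.1 _ hmem)
  set e : ℤ → Fin (p-1) := fun w => ⟨(w-1).toNat % (p-1), Nat.mod_lt _ hp1⟩ with he
  set φ : Fin n → Option (Fin m × Fin (p-1)) := fun i =>
    (φ₀ i).map (fun q => (Fin.cast hlen q.1, e q.2)) with hφ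
  have hcast : ∀ j : Fin m, Fin.cast hlen (Fin.cast hlen.symm j) = j := by
    intro j; apply Fin.ext; rfl
  have hcast2 : ∀ (j : Fin m) (k : Fin ls.length), Fin.cast hlen k = j ↔ k = Fin.cast hlen.symm j := by
    intro j k
    constructor
    · intro h; apply Fin.ext; rw [← h]; rfl
    · intro h; rw [h]; exact hcast j
  refine ⟨φ, ?_, ?_⟩
  · intro j
    set j₀ : Fin ls.length := Fin.cast hlen.symm j with hj₀
    have hne : ls.get j₀ ≠ [] := (hprop _ (List.get_mem ls j₀)).1
    obtain ⟨i, w, hiw⟩ := hA j₀ hne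
    refine ⟨i, e w, ?_⟩
    rw [hφ]
    simp only [hiw, Option.map_some]
    rw [hcast j]
  · intro j
    set j₀ : Fin ls.length := Fin.cast hlen.symm j with hj₀
    have hptw : ∀ i, cf φ j i = ((delta φ₀ j₀ i : ℤ) : ZMod p) := by
      intro i
      unfold cf delta
      cases hq : φ₀ i with
      | none => simp [hφ, hq]
      | some q =>
        simp only [hφ, hq, Option.map_some]
        have hwq := hW i q hq
        obtain ⟨hw1, hw2⟩ := hwq
        by_cases hj : q.1 = j₀
        · rw [if_pos ((hcast2 j q.1).mpr hj), if_pos hj]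
          have htn : (q.2 - 1).toNat % (p-1) = (q.2 - 1).toNat := by
            apply Nat.mod_eq_of_lt
            have : (q.2 - 1).toNat ≤ p - 2 := by omega
            omega
          show ((((e q.2 : Fin (p-1)) : ℕ) + 1 : ℕ) : ZMod p) = ((q.2 : ℤ) : ZMod p)
          have hv : ((e q.2 : Fin (p-1)) : ℕ) = (q.2 - 1).toNat := by
            rw [he]; exact htn
          rw [hv]
          have h3 : (((q.2 - 1).toNat + 1 : ℕ) : ℤ) = q.2 := by
            push_cast [Int.toNat_of_nonneg (by omega : (0:ℤ) ≤ q.2 - 1)]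
            ring
          calc (((q.2 - 1).toNat + 1 : ℕ) : ZMod p)
              = (((((q.2 - 1).toNat + 1 : ℕ) : ℤ)) : ZMod p) := by push_cast; ring
            _ = ((q.2 : ℤ) : ZMod p) := by rw [h3]
        · rw [if_neg (fun hc => hj ((hcast2 j q.1).mp hc)), if_neg hj]
          simp
    calc ∑ i, cf φ j i • g i = ∑ i, ((delta φ₀ j₀ i : ℤ) : ZMod p) • g i :=
          Finset.sum_congr rfl (fun i _ => by rw [hptw i])
      _ = ∑ i, delta φ₀ j₀ i • g i :=
          Finset.sum_congr rfl (fun i _ => by rw [Int.cast_smul_eq_zsmul])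
      _ = ((ls.get j₀).map fun q => q.1 • q.2).sum := hB j₀
      _ = 0 := (hprop _ (List.get_mem ls j₀)).2.2

lemma exists_bad {p : ℕ} [Fact p.Prime] {r n m : ℕ} (hm : 1 ≤ m) (hmn : m ≤ n)
    (hlt : (1 + m*(p-1))^n < p^(r*m)) :
    ∃ g : Fin n → (Fin r → ZMod p),
      ¬ HasDisjointWZeroSubsums (Set.Icc 1 ((p:ℤ)-1)) (Multiset.map g Finset.univ.val) m := by
  classical
  have hp2 : 2 ≤ p := (Fact.out : p.Prime).two_le
  by_contra hcon
  push_neg at hcon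
  have hφ : ∀ g : Fin n → (Fin r → ZMod p), ∃ φ : Fin n → Option (Fin m × Fin (p-1)),
      FullOn φ ∧ ZeroOn φ g := fun g => encode hm g (hcon g)
  set A : Finset (Fin n → Option (Fin m × Fin (p-1))) :=
    Finset.univ.filter (fun φ => FullOn φ) with hA
  have hcover : (Finset.univ : Finset (Fin n → Fin r → ZMod p))
      ⊆ A.biUnion (fun φ => Finset.univ.filter (fun g => ZeroOn φ g)) := by
    intro g _
    obtain ⟨φ, hF, hZ⟩ := hφ g
    exact Finset.mem_biUnion.mpr ⟨φ, Finset.mem_filter.mpr ⟨Finset.mem_univ _, hF⟩,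
      Finset.mem_filter.mpr ⟨Finset.mem_univ _, hZ⟩⟩
  have hZcard : ∀ φ ∈ A, (Finset.univ.filter (fun g : Fin n → Fin r → ZMod p => ZeroOn φ g)).card
      ≤ (p^r)^(n - m) := by
    intro φ hφA
    have hF : FullOn φ := (Finset.mem_filter.mp hφA).2
    have h1 : (Finset.univ.filter (fun g : Fin n → Fin r → ZMod p => ZeroOn φ g)).card
        = Nat.card {g : Fin n → (Fin r → ZMod p) // ZeroOn φ g} := by
      rw [Nat.card_eq_fintype_card, Fintype.card_subtype]
    rw [h1]
    exact card_zeroOn_le φ hF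
  have hAcard : A.card ≤ (1 + m*(p-1))^n := by
    calc A.card ≤ Fintype.card (Fin n → Option (Fin m × Fin (p-1))) := by
          rw [← Finset.card_univ]
          exact Finset.card_le_card (Finset.subset_univ A)
      _ = (1 + m*(p-1))^n := by
          rw [Fintype.card_fun, Fintype.card_option, Fintype.card_prod,
            Fintype.card_fin, Fintype.card_fin, Fintype.card_fin]
          ring
  have hmain : (p^r)^n ≤ (1 + m*(p-1))^n * (p^r)^(n - m) := by
    calc (p^r)^n = Fintype.card (Fin n → Fin r → ZMod p) := by
          rw [Fintype.card_fun, Fintype.card_fun, ZMod.card, Fintype.card_fin, Fintype.card_fin]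
      _ = (Finset.univ : Finset (Fin n → Fin r → ZMod p)).card := (Finset.card_univ).symm
      _ ≤ (A.biUnion (fun φ => Finset.univ.filter (fun g => ZeroOn φ g))).card :=
          Finset.card_le_card hcover
      _ ≤ ∑ φ ∈ A, (Finset.univ.filter (fun g : Fin n → Fin r → ZMod p => ZeroOn φ g)).card :=
          Finset.card_biUnion_le
      _ ≤ ∑ _φ ∈ A, (p^r)^(n - m) := Finset.sum_le_sum hZcard
      _ = A.card * (p^r)^(n - m) := by rw [Finset.sum_const, smul_eq_mul]
      _ ≤ (1 + m*(p-1))^n * (p^r)^(n - m) :=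
          Nat.mul_le_mul_right _ hAcard
  have hpos : 0 < (p^r)^(n - m) := Nat.pow_pos (Nat.pow_pos (by omega))
  have hstrict : (1 + m*(p-1))^n * (p^r)^(n - m) < p^(r*m) * (p^r)^(n - m) :=
    Nat.mul_lt_mul_of_lt_of_le hlt (le_refl _) hpos
  have heq : p^(r*m) * (p^r)^(n - m) = (p^r)^n := by
    rw [← Nat.pow_mul, ← Nat.pow_add, ← Nat.pow_mul]
    congr 1
    rw [← Nat.mul_add, Nat.add_sub_cancel' hmn]
  omega

variable {p : ℕ} [Fact p.Prime]

/-- L1: every multiset of at least r+1 vectors has a weighted zero-subsum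
with weights in [1, p-1]. -/
lemma exists_zero_subsum {r : ℕ} (T : Multiset (Fin r → ZMod p)) (hT : r + 1 ≤ Multiset.card T) :
    ∃ l : List (ℤ × (Fin r → ZMod p)), l ≠ [] ∧
      (∀ q ∈ l, q.1 ∈ Set.Icc 1 ((p:ℤ) - 1)) ∧
      (↑(l.map Prod.snd) : Multiset (Fin r → ZMod p)) ≤ T ∧
      (l.map fun q => q.1 • q.2).sum = 0 := by
  classical
  have hp2 : 2 ≤ p := (Fact.out : p.Prime).two_le
  set LT := T.toList with hLT
  have hlen : r + 1 ≤ LT.length := by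
    rwa [hLT, Multiset.length_toList]
  set v : Fin (r + 1) → (Fin r → ZMod p) := fun k => LT.get (Fin.castLE hlen k) with hv
  have hni : ¬ LinearIndependent (ZMod p) v := by
    intro h
    have := h.fintype_card_le_finrank
    rw [Module.finrank_pi, Fintype.card_fin, Fintype.card_fin] at this
    omega
  obtain ⟨c, hsum, i0, hi0⟩ := Fintype.not_linearIndependent_iff.mp hni
  set t : Finset (Fin (r + 1)) := Finset.univ.filter (fun i => c i ≠ 0) with ht
  have hti0 : i0 ∈ t := by simp [ht, hi0]
  set is : List (Fin (r + 1)) := t.sort (· ≤ ·) with his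
  have hispw : is.Pairwise (· < ·) := by
    have h1 := Finset.pairwise_sort t (· ≤ ·)
    have h2 := Finset.sort_nodup t (· ≤ ·)
    exact (Finset.sortedLT_sort t).pairwise
  set l : List (ℤ × (Fin r → ZMod p)) := is.map (fun i => (((c i).val : ℤ), v i)) with hl
  have hmemis : ∀ i ∈ is, c i ≠ 0 := by
    intro i hi
    have : i ∈ t := (Finset.mem_sort (· ≤ ·)).mp hi
    simpa [ht] using this
  refine ⟨l, ?_, ?_, ?_, ?_⟩
  · simp only [hl, ne_eq, List.map_eq_nil_iff]
    intro h
    rw [his] at h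
    have : i0 ∈ t.sort (· ≤ ·) := (Finset.mem_sort (· ≤ ·)).mpr hti0
    rw [h] at this
    exact absurd this (List.not_mem_nil)
  · intro q hq
    rw [hl, List.mem_map] at hq
    obtain ⟨i, hi, rfl⟩ := hq
    have hne := hmemis i hi
    have hlt : (c i).val < p := ZMod.val_lt (c i)
    have hpos : (c i).val ≠ 0 := fun h => hne ((ZMod.val_eq_zero _).mp h)
    constructor
    · show (1:ℤ) ≤ ((c i).val : ℤ)
      exact_mod_cast Nat.one_le_iff_ne_zero.mpr hpos
    · show ((c i).val : ℤ) ≤ (p:ℤ) - 1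
      have : (c i).val ≤ p - 1 := by omega
      calc ((c i).val : ℤ) ≤ ((p - 1 : ℕ) : ℤ) := by exact_mod_cast this
        _ = (p : ℤ) - 1 := by push_cast [Nat.cast_sub (by omega : 1 ≤ p)]; ring
  · have hmap : l.map Prod.snd = (is.map (Fin.castLE hlen)).map LT.get := by
      simp [hl, hv, List.map_map, Function.comp]
    have hpw' : (is.map (Fin.castLE hlen)).Pairwise (fun x y : Fin LT.length => (x:ℕ) < (y:ℕ)) := by
      refine List.Pairwise.map _ ?_ hispw
      intro a b hab
      exact hab
    have hsub : ((is.map (Fin.castLE hlen)).map LT.get).Sublist LT :=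
      List.map_getElem_sublist hpw'
    rw [hmap]
    calc (↑(((is.map (Fin.castLE hlen)).map LT.get)) : Multiset _) ≤ ↑LT :=
          Multiset.coe_le.mpr hsub.subperm
      _ = T := by rw [hLT, Multiset.coe_toList]
  · have hterm : ∀ i ∈ is, ((c i).val : ℤ) • v i = c i • v i := by
      intro i _
      rw [← Int.cast_smul_eq_zsmul (ZMod p)]
      push_cast
      rw [ZMod.natCast_rightInverse (c i)]
    calc (l.map fun q => q.1 • q.2).sum
        = (is.map fun i => ((c i).val : ℤ) • v i).sum := by
          rw [hl, List.map_map]; rfl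
      _ = (is.map fun i => c i • v i).sum := by
          congr 1
          exact List.map_congr_left hterm
      _ = ∑ i ∈ t, c i • v i := by
          rw [Finset.sum_eq_multiset_sum, ← Finset.sort_eq t (· ≤ ·), ← his,
            Multiset.map_coe, Multiset.sum_coe]
      _ = ∑ i, c i • v i := by
          refine Finset.sum_subset (Finset.subset_univ t) ?_
          intro i _ hit
          have : c i = 0 := by
            by_contra hne
            exact hit (by simp [ht, hne])
          simp [this]
      _ = 0 := hsum

/-- L6: finiteness of the Davenport constant. -/
lemma dw_finite {p : ℕ} [Fact p.Prime] {r : ℕ} (m : ℕ) :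
    ∀ S : Multiset (Fin r → ZMod p), m * (r + 1) ≤ Multiset.card S →
      HasDisjointWZeroSubsums (Set.Icc 1 ((p:ℤ) - 1)) S m := by
  classical
  induction m with
  | zero =>
    intro S _
    exact ⟨[], rfl, by simp, by simp⟩
  | succ m ih =>
    intro S hS
    have hr1 : r + 1 ≤ Multiset.card S := by nlinarith [Nat.le_refl 1]
    set T : Multiset (Fin r → ZMod p) := ↑(S.toList.take (r+1)) with hT
    have hTle : T ≤ S := by
      have : (S.toList.take (r+1)).Sublist S.toList := List.take_sublist _ _
      calc T ≤ ↑S.toList := Multiset.coe_le.mpr this.subperm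
        _ = S := Multiset.coe_toList S
    have hTcard : Multiset.card T = r + 1 := by
      rw [hT, Multiset.coe_card, List.length_take, Multiset.length_toList]
      omega
    obtain ⟨l, hlne, hlW, hlsub, hlsum⟩ := exists_zero_subsum T (le_of_eq hTcard.symm)
    have hlS : (↑(l.map Prod.snd) : Multiset _) ≤ S := le_trans hlsub hTle
    set S' := S - ↑(l.map Prod.snd) with hS'
    have hlenl : l.length ≤ r + 1 := by
      have := Multiset.card_le_card hlsub
      simpa [hTcard] using this
    have hcard' : m * (r + 1) ≤ Multiset.card S' := by
      rw [hS', Multiset.card_sub hlS]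
      simp only [Multiset.coe_card, List.length_map]
      have : (m + 1) * (r + 1) = m * (r + 1) + (r + 1) := by ring
      omega
    obtain ⟨ls, hlslen, hlsprop, hlssub⟩ := ih S' hcard'
    refine ⟨l :: ls, by simp [hlslen], ?_, ?_⟩
    · intro l' hl'
      rcases List.mem_cons.mp hl' with h | h
      · exact h ▸ ⟨hlne, hlW, hlsum⟩
      · exact hlsprop l' h
    · have hfl : (l :: ls).flatten.map Prod.snd
          = (l.map Prod.snd ++ ls.flatten.map Prod.snd : List (Fin r → ZMod p)) := by
        simp
      have hco : ((↑((l :: ls).flatten.map Prod.snd)) : Multiset (Fin r → ZMod p))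
          = (↑(ls.flatten.map Prod.snd) : Multiset (Fin r → ZMod p)) + ↑(l.map Prod.snd) := by
        rw [hfl, ← Multiset.coe_add]
        exact add_comm _ _
      rw [hco]
      exact add_le_of_le_sub hlS hlssub

lemma flatten_length_ge {α : Type*} (ls : List (List α)) (h : ∀ l ∈ ls, l ≠ []) :
    ls.length ≤ ls.flatten.length := by
  induction ls with
  | nil => simp
  | cons a ls ih =>
    have ha : a ≠ [] := h a List.mem_cons_self
    have hlen : 1 ≤ a.length := List.length_pos_iff.mpr ha
    have := ih (fun l hl => h l (List.mem_cons_of_mem a hl))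
    simp only [List.flatten_cons, List.length_append, List.length_cons]
    omega


end Aux

/-- for fixed `m` and prime `p`, for all sufficiently large `r`,
`D_{A,m}(C_p^r) ≥ (log p) · m / log(1 + m(p-1)) · r`. -/
theorem stmt19 (m : ℕ) (hm : 1 ≤ m) (p : ℕ) (hp : p.Prime) :
    ∃ R : ℕ, ∀ r : ℕ, R ≤ r →
      Real.log p * m / Real.log (1 + (m : ℝ) * ((p : ℝ) - 1)) * r ≤
        (DW (Set.Icc 1 ((p : ℤ) - 1)) (Fin r → ZMod p) m : ℝ) := by
  classical
  have : Fact p.Prime := ⟨hp⟩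
  have hp2 : 2 ≤ p := hp.two_le
  refine ⟨0, fun r _ => ?_⟩
  set W := Set.Icc (1:ℤ) ((p:ℤ) - 1) with hW
  set Sset := {n : ℕ | ∀ S : Multiset (Fin r → ZMod p),
    n ≤ Multiset.card S → HasDisjointWZeroSubsums W S m} with hSset
  have hne : Sset.Nonempty := ⟨m * (r + 1), fun S hS => dw_finite m S hS⟩
  have hd : DW W (Fin r → ZMod p) m ∈ Sset := Nat.sInf_mem hne
  set d := DW W (Fin r → ZMod p) m with hdd
  set q : ℕ := 1 + m * (p - 1) with hq
  have hqcast : ((q:ℕ):ℝ) = 1 + (m : ℝ) * ((p : ℝ) - 1) := by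
    rw [hq]
    push_cast [Nat.cast_sub (by omega : 1 ≤ p)]
    ring
  have hq2 : 2 ≤ q := by
    have : 0 < m * (p - 1) := Nat.mul_pos (by omega) (by omega)
    omega
  by_contra hcon
  push_neg at hcon
  rw [← hqcast] at hcon
  have hlogq : 0 < Real.log q := Real.log_pos (by exact_mod_cast hq2)
  by_cases hdm : d < m
  · -- too short for m disjoint subsums
    have hdis := hd (Multiset.replicate d (0 : Fin r → ZMod p)) (by simp)
    obtain ⟨ls, hlen, hprop, hsub⟩ := hdis
    have h1 : ls.length ≤ ls.flatten.length :=
      flatten_length_ge ls (fun l hl => (hprop l hl).1)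
    have h2 := Multiset.card_le_card hsub
    simp only [Multiset.coe_card, List.length_map, Multiset.card_replicate] at h2
    omega
  · push_neg at hdm
    -- derive q^d < p^(r*m)
    have hcon' : (d : ℝ) * Real.log q < Real.log p * m * r := by
      have h := mul_lt_mul_of_pos_right hcon hlogq
      calc (d : ℝ) * Real.log q < Real.log p * m / Real.log q * r * Real.log q := h
        _ = Real.log p * m * r := by
            field_simp
    have hltR : ((q:ℝ))^d < ((p:ℝ))^(r*m) := by
      have hq0 : (0:ℝ) < (q:ℝ)^d := by positivity
      have hp0 : (0:ℝ) < (p:ℝ)^(r*m) := by positivity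
      rw [← Real.exp_log hq0, ← Real.exp_log hp0]
      apply Real.exp_lt_exp.mpr
      rw [Real.log_pow, Real.log_pow]
      push_cast
      calc (d : ℝ) * Real.log q < Real.log p * m * r := hcon'
        _ = (r * m : ℝ) * Real.log p := by ring
    have hlt : q^d < p^(r*m) := by
      have : ((q^d : ℕ) : ℝ) < ((p^(r*m) : ℕ) : ℝ) := by push_cast; exact hltR
      exact_mod_cast this
    obtain ⟨g, hg⟩ := exists_bad hm hdm (hq ▸ hlt)
    have hcard : Multiset.card (Multiset.map g Finset.univ.val) = d := by
      simp
    exact hg (hd (Multiset.map g Finset.univ.val) (le_of_eq hcard.symm))
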